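/- Let m ≥ 2 and let K be a normal subgroup of the free group F_m. For an integer n let W'(n) be the number of elements w ∈ K of reduced word length n. Then for all integers ℓ, ℓ' ≥ 1, W'(ℓ + ℓ' + 2) ≥ W'(ℓ) · W'(ℓ'): the counting function of reduced words in K is supermultiplicative up to a shift of 2. -/

import Mathlib

/-- The free group on `m` generators. -/
abbrev FG (m : ℕ) := FreeGroup (Fin m)

/-- `W'_K(n)`: the number of elements of `K` of reduced word length `n`. -/
noncomputable def Wred (m : ℕ) (K : Subgroup (FG m)) (n : ℕ) : ℕ :=
  Nat.card {w : FG m // w ∈ K ∧ FreeGroup.norm w = n}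

namespace WredAux

open FreeGroup List

variable {α : Type*} [DecidableEq α]

/-- The no-cancellation relation on letters. -/
def R : (α × Bool) → (α × Bool) → Prop := fun a b => ¬(a.1 = b.1 ∧ a.2 = !b.2)

lemma reduce_eq_self_of_chain' : ∀ {L : List (α × Bool)}, List.Chain' R L → FreeGroup.reduce L = L
  | [], _ => rfl
  | [x], _ => rfl
  | x :: hd :: tl, h => by
    have ht := reduce_eq_self_of_chain' (List.isChain_cons_cons.mp h).2
    have hr : R x hd := (List.isChain_cons_cons.mp h).1
    rw [FreeGroup.reduce.cons, ht]
    simp only [if_neg hr]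

lemma chain'_of_reduce_eq_self : ∀ {L : List (α × Bool)}, FreeGroup.reduce L = L → List.Chain' R L
  | [], _ => List.isChain_nil
  | x :: t, h => by
    rcases hr : FreeGroup.reduce t with _ | ⟨hd, tl⟩
    · have : FreeGroup.reduce (x :: t) = [x] := by rw [FreeGroup.reduce.cons, hr]
      rw [h] at this
      cases this
      exact List.isChain_singleton x
    · by_cases hc : x.1 = hd.1 ∧ x.2 = !hd.2
      · exfalso
        have h1 : FreeGroup.reduce (x :: t) = tl := by
          rw [FreeGroup.reduce.cons, hr]
          exact if_pos hc
        rw [h] at h1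
        have h2 : (FreeGroup.reduce t).length ≤ t.length :=
          (FreeGroup.reduce.red (L := t)).length_le
        rw [hr] at h2
        have h3 := congrArg List.length h1
        simp only [List.length_cons] at h3 h2
        omega
      · have h1 : FreeGroup.reduce (x :: t) = x :: hd :: tl := by
          rw [FreeGroup.reduce.cons, hr]
          exact if_neg hc
        rw [h] at h1
        have ht : t = hd :: tl := by injection h1
        have hredt : FreeGroup.reduce t = t := by rw [hr, ht]
        have := chain'_of_reduce_eq_self hredt
        rw [ht] at this ⊢
        exact List.isChain_cons_cons.mpr ⟨hc, this⟩

lemma chain'_toWord (w : FreeGroup α) : List.Chain' R w.toWord :=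
  chain'_of_reduce_eq_self (FreeGroup.reduce_toWord w)


lemma key (m : ℕ) (hm : 2 ≤ m) (K : Subgroup (FG m)) [hN : K.Normal]
    (u v : FG m) (hu : u ∈ K) (hv : v ∈ K)
    (hu1 : u.toWord ≠ []) (hv1 : v.toWord ≠ []) :
    ∃ w : FG m, w ∈ K ∧ ∃ a : Fin m × Bool,
      w.toWord = u.toWord ++ a :: (v.toWord ++ [(a.1, !a.2)]) := by
  set Lu := u.toWord with hLu
  set Lv := v.toWord with hLv
  set b1 : Fin m × Bool := ((Lu.getLast hu1).1, !(Lu.getLast hu1).2) with hb1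
  set b2 : Fin m × Bool := ((Lv.head hv1).1, !(Lv.head hv1).2) with hb2
  set b3 : Fin m × Bool := Lv.getLast hv1 with hb3
  obtain ⟨a, ha⟩ : ∃ a : Fin m × Bool, a ∉ ({b1, b2, b3} : Finset (Fin m × Bool)) := by
    by_contra hcon
    push_neg at hcon
    have h1 : (Finset.univ : Finset (Fin m × Bool)).card ≤
        ({b1, b2, b3} : Finset (Fin m × Bool)).card :=
      Finset.card_le_card (fun x _ => hcon x)
    have h2 : ({b1, b2, b3} : Finset (Fin m × Bool)).card ≤ 3 :=
      (Finset.card_insert_le _ _).trans (Nat.succ_le_succ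
        ((Finset.card_insert_le _ _).trans (by simp)))
    have h3 : (Finset.univ : Finset (Fin m × Bool)).card = m * 2 := by
      simp [Finset.card_univ]
    omega
  simp only [Finset.mem_insert, Finset.mem_singleton, not_or] at ha
  obtain ⟨ha1, ha2, ha3⟩ := ha
  set ia : Fin m × Bool := (a.1, !a.2) with hia
  set L : List (Fin m × Bool) := Lu ++ a :: (Lv ++ [ia]) with hL
  have hchain : List.Chain' R L := by
    rw [hL]
    show List.IsChain R _
    rw [List.isChain_append]
    refine ⟨chain'_toWord u, ?_, ?_⟩
    · rw [List.isChain_cons]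
      constructor
      · intro y hy
        rw [List.head?_append_of_ne_nil _ hv1, List.head?_eq_head hv1] at hy
        cases hy
        intro ⟨hc1, hc2⟩
        exact ha2 (by rw [hb2]; exact Prod.ext hc1 hc2)
      · rw [List.isChain_append]
        refine ⟨chain'_toWord v, List.isChain_singleton ia, ?_⟩
        intro x hx y hy
        rw [List.getLast?_eq_getLast hv1] at hx
        cases hx
        cases hy
        intro ⟨hc1, hc2⟩
        apply ha3
        rw [hb3]
        have h2 : (Lv.getLast hv1).2 = a.2 := by simpa [hia] using hc2
        exact Prod.ext hc1.symm h2.symm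
    · intro x hx y hy
      rw [List.getLast?_eq_getLast hu1] at hx
      cases hx
      cases hy
      intro ⟨hc1, hc2⟩
      have h2 : a.2 = !(Lu.getLast hu1).2 := by
        have := hc2
        rw [this]
        simp
      exact ha1 (by rw [hb1]; exact Prod.ext hc1.symm h2)
  refine ⟨FreeGroup.mk L, ?_, a, ?_⟩
  · have hinv : (FreeGroup.mk [a] : FG m)⁻¹ = FreeGroup.mk [ia] := by
      rw [FreeGroup.inv_mk]
      rfl
    have e2 : L = ((Lu ++ [a]) ++ Lv) ++ [ia] := by rw [hL]; simp
    have hsplit : FreeGroup.mk L = u * (FreeGroup.mk [a] * v * (FreeGroup.mk [a])⁻¹) := by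
      rw [e2, ← FreeGroup.mul_mk, ← FreeGroup.mul_mk, ← FreeGroup.mul_mk, hLu, hLv,
        FreeGroup.mk_toWord, FreeGroup.mk_toWord, ← hinv]
      group
    rw [hsplit]
    exact K.mul_mem hu (hN.conj_mem v hv _)
  · rw [FreeGroup.toWord_mk, reduce_eq_self_of_chain' hchain]


lemma finite_norm (m n : ℕ) (K : Subgroup (FG m)) :
    Finite {w : FG m // w ∈ K ∧ FreeGroup.norm w = n} := by
  let f : {w : FG m // w ∈ K ∧ FreeGroup.norm w = n} → (Fin n → Fin m × Bool) :=
    fun w i => w.1.toWord.get ⟨i.1, by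
      have : w.1.toWord.length = n := w.2.2
      omega⟩
  apply Finite.of_injective f
  rintro ⟨w, hw, hwn⟩ ⟨w', hw', hwn'⟩ h
  have hlen : w.toWord.length = w'.toWord.length := by
    have h1 : w.toWord.length = n := hwn
    have h2 : w'.toWord.length = n := hwn'
    omega
  have : w.toWord = w'.toWord := by
    apply List.ext_get hlen
    intro i h1 h2
    have h3 : w.toWord.length = n := hwn
    have := congrFun h ⟨i, by omega⟩
    exact this
  exact Subtype.ext (FreeGroup.toWord_injective this)

end WredAux

/-- **Shifted supermultiplicativity of the cogrowth counting function.** For a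
normal subgroup `K` of the free group `F_m` (`m ≥ 2`) one has
`W'(ℓ+ℓ'+2) ≥ W'(ℓ)·W'(ℓ')` for all `ℓ, ℓ' ≥ 1`. -/
theorem Wred_supermultiplicative_shift
    (m : ℕ) (hm : 2 ≤ m) (K : Subgroup (FG m)) [K.Normal]
    (ℓ ℓ' : ℕ) (hℓ : 1 ≤ ℓ) (hℓ' : 1 ≤ ℓ') :
    Wred m K ℓ * Wred m K ℓ' ≤ Wred m K (ℓ + ℓ' + 2) := by
  classical
  haveI : Finite {w : FG m // w ∈ K ∧ FreeGroup.norm w = ℓ + ℓ' + 2} :=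
    WredAux.finite_norm m (ℓ + ℓ' + 2) K
  have H : ∀ p : {w : FG m // w ∈ K ∧ FreeGroup.norm w = ℓ} ×
      {w : FG m // w ∈ K ∧ FreeGroup.norm w = ℓ'},
      ∃ w : FG m, (w ∈ K ∧ FreeGroup.norm w = ℓ + ℓ' + 2) ∧
        w.toWord.take ℓ = p.1.1.toWord ∧ (w.toWord.drop (ℓ + 1)).take ℓ' = p.2.1.toWord := by
    rintro ⟨⟨u, hu, hun⟩, ⟨v, hv, hvn⟩⟩
    have hLu : u.toWord.length = ℓ := hun
    have hLv : v.toWord.length = ℓ' := hvn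
    have hu1 : u.toWord ≠ [] := by
      intro h
      rw [h] at hLu
      simp at hLu
      omega
    have hv1 : v.toWord ≠ [] := by
      intro h
      rw [h] at hLv
      simp at hLv
      omega
    obtain ⟨w, hwK, a, hw⟩ := WredAux.key m hm K u v hu hv hu1 hv1
    refine ⟨w, ⟨hwK, ?_⟩, ?_, ?_⟩
    · show w.toWord.length = ℓ + ℓ' + 2
      rw [hw]
      simp only [List.length_append, List.length_cons, List.length_nil, hLu, hLv]
      omega
    · rw [hw]
      exact List.take_left' hLu
    · have e : u.toWord ++ a :: (v.toWord ++ [(a.1, !a.2)]) =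
          (u.toWord ++ [a]) ++ (v.toWord ++ [(a.1, !a.2)]) := by simp
      have hlen1 : (u.toWord ++ [a]).length = ℓ + 1 := by simp [hLu]
      rw [hw, e, List.drop_left' hlen1]
      exact List.take_left' hLv
  choose g hg1 hg2 hg3 using H
  have hinj : Function.Injective (fun p : {w : FG m // w ∈ K ∧ FreeGroup.norm w = ℓ} ×
      {w : FG m // w ∈ K ∧ FreeGroup.norm w = ℓ'} =>
      (⟨g p, hg1 p⟩ : {w : FG m // w ∈ K ∧ FreeGroup.norm w = ℓ + ℓ' + 2})) := by
    rintro p q h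
    simp only [Subtype.mk_eq_mk] at h
    have h2 := hg2 p
    have h3 := hg3 p
    rw [h, hg2 q] at h2
    rw [h, hg3 q] at h3
    refine Prod.ext ?_ ?_
    · exact Subtype.ext (FreeGroup.toWord_injective h2.symm)
    · exact Subtype.ext (FreeGroup.toWord_injective h3.symm)
  calc Wred m K ℓ * Wred m K ℓ' = Nat.card ({w : FG m // w ∈ K ∧ FreeGroup.norm w = ℓ} ×
        {w : FG m // w ∈ K ∧ FreeGroup.norm w = ℓ'}) := (Nat.card_prod _ _).symm
    _ ≤ Nat.card {w : FG m // w ∈ K ∧ FreeGroup.norm w = ℓ + ℓ' + 2} :=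
        Nat.card_le_card_of_injective _ hinj
    _ = Wred m K (ℓ + ℓ' + 2) := rfl
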